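/- Let n ≥ 1 and let R be a commutative ring. Every matrix M ∈ M_{2n}(R) can be written as M = ι(h₁,h₂) + ξ·L·ξ^{-1}, where h₁, h₂ ∈ M_n(R) and L ∈ M_{2n}(R) is lower triangular. (This is the decomposition gl_{2n} = h + ξ b⁻ ξ^{-1}, where h is the Levi subalgebra of block-diagonal matrices of the (n,n)-parabolic and b⁻ is the lower-triangular Borel subalgebra.) -/

import Mathlib

open Matrix

/-- The `n × n` antidiagonal permutation matrix `w_n`, with `(i,j)` entry `δ_{i, n+1-j}`. -/
def wMat (n : ℕ) (R : Type*) [CommRing R] : Matrix (Fin n) (Fin n) R :=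
  fun i j => if (i : ℕ) + (j : ℕ) + 1 = n then 1 else 0

/-- The block diagonal matrix `ι(A, D) = [[A, 0], [0, D]]`. -/
def iotaBlk {n : ℕ} {R : Type*} [CommRing R] (A D : Matrix (Fin n) (Fin n) R) :
    Matrix (Fin n ⊕ Fin n) (Fin n ⊕ Fin n) R :=
  Matrix.fromBlocks A 0 0 D

/-- The matrix `ξ = [[1_n, w_n], [0_n, w_n]]`. -/
def xiMat (n : ℕ) (R : Type*) [CommRing R] : Matrix (Fin n ⊕ Fin n) (Fin n ⊕ Fin n) R :=
  Matrix.fromBlocks 1 (wMat n R) 0 (wMat n R)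

/-- The matrix `ξ⁻¹ = [[1_n, -1_n], [0_n, w_n]]`. -/
def xiInvMat (n : ℕ) (R : Type*) [CommRing R] : Matrix (Fin n ⊕ Fin n) (Fin n ⊕ Fin n) R :=
  Matrix.fromBlocks 1 (-1) 0 (wMat n R)

lemma wMat_eq_left (n : ℕ) (R : Type*) [CommRing R] :
    wMat n R = (1 : Matrix (Fin n) (Fin n) R).submatrix id ⇑(Fin.revPerm) := by
  ext i j
  simp only [wMat, Matrix.submatrix_apply, id_eq, Fin.revPerm_apply, Matrix.one_apply]
  have hi := i.isLt
  have hj := j.isLt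
  by_cases h : (i : ℕ) + (j : ℕ) + 1 = n
  · rw [if_pos h, if_pos]
    ext
    simp [Fin.rev]
    omega
  · rw [if_neg h, if_neg]
    intro hij
    apply h
    have : (i : ℕ) = (j.rev : ℕ) := by rw [hij]
    simp [Fin.rev] at this
    omega

lemma wMat_eq_right (n : ℕ) (R : Type*) [CommRing R] :
    wMat n R = (1 : Matrix (Fin n) (Fin n) R).submatrix ⇑(Fin.revPerm) id := by
  ext i j
  simp only [wMat, Matrix.submatrix_apply, id_eq, Fin.revPerm_apply, Matrix.one_apply]
  have hi := i.isLt
  have hj := j.isLt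
  by_cases h : (i : ℕ) + (j : ℕ) + 1 = n
  · rw [if_pos h, if_pos]
    ext
    simp [Fin.rev]
    omega
  · rw [if_neg h, if_neg]
    intro hij
    apply h
    have : (i.rev : ℕ) = (j : ℕ) := by rw [hij]
    simp [Fin.rev] at this
    omega

/-- Every `2n × 2n` matrix `M` over a commutative ring `R` may be written as
`M = ι(h₁, h₂) + ξ · L · ξ⁻¹` with `L` lower triangular:
`gl_{2n} = h + ξ b⁻ ξ⁻¹`. -/
theorem statement0 (n : ℕ) (hn : 1 ≤ n) (R : Type*) [CommRing R]
    (M : Matrix (Fin n ⊕ Fin n) (Fin n ⊕ Fin n) R) :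
    ∃ (h₁ h₂ : Matrix (Fin n) (Fin n) R)
      (L : Matrix (Fin n ⊕ Fin n) (Fin n ⊕ Fin n) R),
      (∀ i j : Fin n ⊕ Fin n,
          (finSumFinEquiv i : ℕ) < (finSumFinEquiv j : ℕ) → L i j = 0) ∧
      M = iotaBlk h₁ h₂ + xiMat n R * L * xiInvMat n R := by
  set w : Matrix (Fin n) (Fin n) R := wMat n R with hw
  set A := M.toBlocks₁₁
  set B := M.toBlocks₁₂
  set C := M.toBlocks₂₁
  set D := M.toBlocks₂₂
  -- strictly lower triangular correction
  set a : Matrix (Fin n) (Fin n) R :=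
    fun i j => if (j : ℕ) < (i : ℕ) then -((B + C) i j) else 0 with ha
  set X : Matrix (Fin n) (Fin n) R := B + a + C with hX
  have hXut : ∀ i j : Fin n, (j : ℕ) < (i : ℕ) → X i j = 0 := by
    intro i j hij
    simp only [hX, ha, Matrix.add_apply]
    show B i j + (if (j : ℕ) < (i : ℕ) then -((B + C) i j) else 0) + C i j = 0
    rw [if_pos hij, Matrix.add_apply]
    ring
  set d : Matrix (Fin n) (Fin n) R := X.submatrix ⇑Fin.revPerm ⇑Fin.revPerm with hd
  have hww : w * w = 1 := by
    rw [hw]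
    nth_rewrite 2 [wMat_eq_right]
    rw [wMat_eq_left, Matrix.submatrix_mul_equiv, Matrix.one_mul, Matrix.submatrix_id_id]
  have hwdw : w * d * w = X := by
    rw [hw, hd]
    nth_rewrite 2 [wMat_eq_right]
    rw [wMat_eq_left, Matrix.submatrix_mul_equiv, Matrix.one_mul,
      Matrix.submatrix_mul_equiv, Matrix.mul_one, Matrix.submatrix_id_id]
  have hwwC : w * (w * C) = C := by rw [← Matrix.mul_assoc, hww, Matrix.one_mul]
  refine ⟨A - a - C, D - B - a, Matrix.fromBlocks a 0 (w * C) d, ?_, ?_⟩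
  · rintro (i | i) (j | j) hij <;>
      simp only [finSumFinEquiv_apply_left, finSumFinEquiv_apply_right, Fin.coe_castAdd,
        Fin.coe_natAdd] at hij
    · simp only [Matrix.fromBlocks_apply₁₁, ha]
      show (if (j : ℕ) < (i : ℕ) then -((B + C) i j) else (0 : R)) = 0
      rw [if_neg (by omega)]
    · simp only [Matrix.fromBlocks_apply₁₂, Matrix.zero_apply]
    · exact absurd hij (by have := j.isLt; omega)
    · simp only [Matrix.fromBlocks_apply₂₂, hd, Matrix.submatrix_apply, Fin.revPerm_apply]
      exact hXut _ _ (by simp [Fin.rev]; omega)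
  · have hM : M = Matrix.fromBlocks A B C D := (Matrix.fromBlocks_toBlocks M).symm
    rw [hM]
    show _ = iotaBlk _ _ + Matrix.fromBlocks 1 w 0 w * _ * Matrix.fromBlocks 1 (-1) 0 w
    rw [Matrix.fromBlocks_multiply, Matrix.fromBlocks_multiply]
    unfold iotaBlk
    rw [Matrix.fromBlocks_add]
    rw [Matrix.fromBlocks_inj]
    refine ⟨?_, ?_, ?_, ?_⟩
    · simp only [Matrix.one_mul, Matrix.mul_one, Matrix.zero_mul, Matrix.mul_zero,
        add_zero, zero_add, hwwC]
      abel
    · simp only [Matrix.one_mul, Matrix.mul_one, Matrix.zero_mul, Matrix.mul_zero,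
        add_zero, zero_add, Matrix.mul_neg, Matrix.mul_one, hwwC,
        Matrix.add_mul, hwdw, hX]
      abel
    · simp only [Matrix.one_mul, Matrix.mul_one, Matrix.zero_mul, Matrix.mul_zero,
        add_zero, zero_add, hwwC]
    · simp only [Matrix.one_mul, Matrix.mul_one, Matrix.zero_mul, Matrix.mul_zero,
        add_zero, zero_add, Matrix.mul_neg, hwwC, hwdw, hX]
      abel
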